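/- (Symmetric standard division.) For every n ≥ 3 and every word V in the letters σ₁^{±1},…,σ_{n−1}^{±1}, there exist positive standard words P and Q such that the product of V in B_n equals (product of Q)⁻¹·(product of P). -/

import Mathlib

namespace Braid

/-- The braid relations on `n` strands: generators `0, …, n-2` stand for `σ₁, …, σ_{n-1}`. -/
def braidRels (n : ℕ) : Set (FreeGroup (Fin (n - 1))) :=
  { r | (∃ i j : Fin (n - 1), (i : ℕ) + 2 ≤ (j : ℕ) ∧
          r = FreeGroup.of i * FreeGroup.of j * (FreeGroup.of i)⁻¹ * (FreeGroup.of j)⁻¹) ∨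
        (∃ i j : Fin (n - 1), (j : ℕ) = (i : ℕ) + 1 ∧
          r = FreeGroup.of i * FreeGroup.of j * FreeGroup.of i *
              (FreeGroup.of j * FreeGroup.of i * FreeGroup.of j)⁻¹) }

/-- The braid group `B_n`, presented by `σ₁, …, σ_{n-1}` and the braid relations. -/
abbrev BraidGroup (n : ℕ) := PresentedGroup (braidRels n)

/-- The standard generator `σ i` of `B_n` (1-indexed); junk value `1` out of range. -/
def s (n : ℕ) (i : ℕ) : BraidGroup n :=
  if h : 1 ≤ i ∧ i ≤ n - 1 then PresentedGroup.of (⟨i - 1, by omega⟩ : Fin (n - 1)) else 1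

/-- The Garside half-twist `Δ = (σ₁)(σ₂σ₁)(σ₃σ₂σ₁)⋯(σ_{n-1}σ_{n-2}⋯σ₁)` in `B_n`. -/
def halfTwist (n : ℕ) : BraidGroup n :=
  ((List.range (n - 1)).map
    (fun r => (((List.range (r + 1)).reverse).map (fun k => s n (k + 1))).prod)).prod

/-- The submonoid of positive braids of `B_n`: the monoid generated by `σ₁, …, σ_{n-1}`. -/
def positive (n : ℕ) : Submonoid (BraidGroup n) :=
  Submonoid.closure (s n '' Set.Icc 1 (n - 1))

/-- The extended generators `ₐσᵢ` of `B_n`: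
`₀σᵢ = σᵢ`, `₁σᵢ = Δ·σᵢ⁻¹`, `₂σᵢ = σ_{n-i}`, `₃σᵢ = Δ·σ_{n-i}⁻¹`. -/
def es (n : ℕ) (a : ZMod 4) (i : ℕ) : BraidGroup n :=
  if a = 0 then s n i
  else if a = 1 then halfTwist n * (s n i)⁻¹
  else if a = 2 then s n (n - i)
  else halfTwist n * (s n (n - i))⁻¹

/-- An extended letter `ₐσᵢ^{e}` is coded as `(a, i, e)`, where `e = true` means
exponent `+1` (a positive letter) and `e = false` means exponent `-1` (a negative letter). -/
abbrev ELetter : Type := ZMod 4 × ℕ × Bool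

/-- The element of `B_n` represented by an extended letter. -/
def eletterProd (n : ℕ) (x : ELetter) : BraidGroup n :=
  if x.2.2 then es n x.1 x.2.1 else (es n x.1 x.2.1)⁻¹

/-- The element of `B_n` represented by an extended word. -/
def eprod (n : ℕ) (W : List ELetter) : BraidGroup n :=
  (W.map (eletterProd n)).prod

/-- The element of `B_n` represented by a positive extended word,
coded as a list of pairs `(a, i)` standing for the letters `ₐσᵢ` (no inverses). -/
def eposProd (n : ℕ) (P : List (ZMod 4 × ℕ)) : BraidGroup n :=
  (P.map (fun x => es n x.1 x.2)).prod

/-- A standard word is a list of pairs `(i, e)` standing for the letters `σᵢ^{±1}`;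
this is the element of `B_n` it represents. -/
def sprod (n : ℕ) (V : List (ℕ × Bool)) : BraidGroup n :=
  (V.map (fun x => if x.2 then s n x.1 else (s n x.1)⁻¹)).prod

/-- The element of `B_n` represented by a positive standard word (a list of indices). -/
def posProd (n : ℕ) (P : List ℕ) : BraidGroup n :=
  (P.map (s n)).prod

/-- The shift `sh(d, ₐσⱼ^{e}) = ₍ₐ₊d₎σⱼ^{f}`, with `f = e` if `d ∈ {0,2}` and
`f = -e` if `d ∈ {1,3}`. -/
def sh (d : ZMod 4) (x : ELetter) : ELetter :=
  (x.1 + d, x.2.1, if d = 0 ∨ d = 2 then x.2.2 else !x.2.2)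

/-- One step of the inductive definition of the separation of an extended word. -/
def sepStep (t : List (ZMod 4) × ZMod 4 × List (ZMod 4)) (x : ELetter) :
    List (ZMod 4) × ZMod 4 × List (ZMod 4) :=
  if x.2.2 = false then (t.1, t.2.1, t.2.2 ++ [-t.2.1])
  else
    match t.2.2 with
    | [] => (t.1 ++ [0], t.2.1, [])
    | a :: L'' => (t.1 ++ [a + t.2.1 + 1], t.2.1 + 2, L'' ++ [3 - t.2.1])

/-- The separation `(L, δ, L')` of an extended word, defined inductively from the left. -/
def separation (W : List ELetter) : List (ZMod 4) × ZMod 4 × List (ZMod 4) :=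
  W.foldl sepStep ([], 0, [])

/-- The bishift `SH2(L, δ, L', W)`: the first `|L|` letters of `W` are shifted by the
entries of `L`, the remaining letters are shifted by `δ +` the entries of `L'`. -/
def SH2 (L : List (ZMod 4)) (δ : ZMod 4) (L' : List (ZMod 4)) (W : List ELetter) :
    List ELetter :=
  List.zipWith sh L (W.take L.length) ++
    List.zipWith sh (L'.map (fun d => δ + d)) (W.drop L.length)


lemma braid_rel_one {n : ℕ} {r : FreeGroup (Fin (n-1))} (h : r ∈ braidRels n) :
    (QuotientGroup.mk r : BraidGroup n) = 1 :=
  (QuotientGroup.eq_one_iff r).mpr (Subgroup.subset_normalClosure h)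

lemma of_comm {n : ℕ} (a b : Fin (n-1)) (h : (a:ℕ) + 2 ≤ b) :
    (PresentedGroup.of a : BraidGroup n) * PresentedGroup.of b
      = PresentedGroup.of b * PresentedGroup.of a := by
  have h2 := braid_rel_one (n := n) (Or.inl ⟨a, b, h, rfl⟩)
  simp only [QuotientGroup.mk_mul, QuotientGroup.mk_inv] at h2
  rw [mul_inv_eq_one, mul_inv_eq_iff_eq_mul] at h2
  exact h2

lemma of_braid {n : ℕ} (a b : Fin (n-1)) (h : (b:ℕ) = (a:ℕ) + 1) :
    (PresentedGroup.of a : BraidGroup n) * PresentedGroup.of b * PresentedGroup.of a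
      = PresentedGroup.of b * PresentedGroup.of a * PresentedGroup.of b := by
  have h2 := braid_rel_one (n := n) (Or.inr ⟨a, b, h, rfl⟩)
  simp only [QuotientGroup.mk_mul, QuotientGroup.mk_inv] at h2
  rw [mul_inv_eq_one] at h2
  exact h2

lemma s_comm {n i j : ℕ} (h1 : 1 ≤ i) (h2 : i + 2 ≤ j) (h3 : j ≤ n - 1) :
    s n i * s n j = s n j * s n i := by
  rw [s, s, dif_pos ⟨h1, by omega⟩, dif_pos ⟨by omega, h3⟩]
  exact of_comm _ _ (by simp; omega)

lemma s_braid {n i : ℕ} (h1 : 1 ≤ i) (h2 : i + 1 ≤ n - 1) :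
    s n i * s n (i+1) * s n i = s n (i+1) * s n i * s n (i+1) := by
  rw [s, s, dif_pos ⟨h1, by omega⟩, dif_pos ⟨by omega, h2⟩]
  exact of_braid _ _ (by simp; omega)

/-- cons-form commutation -/
lemma s_comm' {n i j : ℕ} (h1 : 1 ≤ i) (h2 : i + 2 ≤ j) (h3 : j ≤ n - 1) (x : BraidGroup n) :
    s n i * (s n j * x) = s n j * (s n i * x) := by
  rw [← mul_assoc, s_comm h1 h2 h3, mul_assoc]

/-- cons-form braid relation -/
lemma s_braid' {n i : ℕ} (h1 : 1 ≤ i) (h2 : i + 1 ≤ n - 1) (x : BraidGroup n) :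
    s n i * (s n (i+1) * (s n i * x)) = s n (i+1) * (s n i * (s n (i+1) * x)) := by
  rw [← mul_assoc, ← mul_assoc, s_braid h1 h2, mul_assoc, mul_assoc]

lemma posProd_append {n : ℕ} (P Q : List ℕ) :
    posProd n (P ++ Q) = posProd n P * posProd n Q := by
  simp [posProd]

def cword (k : ℕ) : List ℕ := (List.range k).map (·+1)

lemma cword_succ (k : ℕ) : cword (k+1) = cword k ++ [k+1] := by
  simp [cword, List.range_succ]

lemma mem_cword {k j : ℕ} (h : j ∈ cword k) : 1 ≤ j ∧ j ≤ k := by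
  simp [cword] at h
  omega

def cc (n k : ℕ) : BraidGroup n := posProd n (cword k)

lemma cc_zero' {n : ℕ} (x : BraidGroup n) : cc n 0 * x = x := by
  simp [cc, cword, posProd]

lemma cc_succ' {n k : ℕ} (x : BraidGroup n) :
    cc n (k+1) * x = cc n k * (s n (k+1) * x) := by
  rw [cc, cc, cword_succ, posProd_append, mul_assoc]
  simp [posProd]

/-- σ_j commutes with cc m when m + 2 ≤ j. -/
lemma s_comm_cc' {n : ℕ} : ∀ (m j : ℕ), m + 2 ≤ j → j ≤ n - 1 →
    ∀ x : BraidGroup n, s n j * (cc n m * x) = cc n m * (s n j * x) := by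
  intro m
  induction m with
  | zero => intro j _ _ x; rw [cc_zero', cc_zero']
  | succ m ih =>
    intro j h2 h3 x
    rw [cc_succ', cc_succ', ih j (by omega) h3, s_comm' (by omega) (by omega) h3]

/-- σ_i · cc k ... : cc k * σ_i = σ_{i+1} * cc k for i+1 ≤ k ≤ n-1 -/
lemma cc_conj' {n i : ℕ} (h1 : 1 ≤ i) : ∀ k, i + 1 ≤ k → k ≤ n - 1 →
    ∀ x : BraidGroup n, cc n k * (s n i * x) = s n (i+1) * (cc n k * x) := by
  intro k
  induction k with
  | zero => intro hk; exact absurd hk (by omega)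
  | succ k ih =>
    intro hk hkn x
    rcases Nat.lt_or_ge i k with hik | hik
    · -- i + 1 ≤ k : use induction step
      rw [cc_succ', cc_succ', ← s_comm' h1 (by omega) hkn, ih (by omega) (by omega)]
    · -- k = i : base case
      obtain ⟨m, rfl⟩ : ∃ m, i = m + 1 := ⟨i - 1, by omega⟩
      have hk' : k = m + 1 := by omega
      subst hk'
      simp only [cc_succ']
      rw [s_braid' (i := m+1) (by omega) (by omega),
        s_comm_cc' m (m+1+1) (by omega) hkn]

/-- (cc k)² σ_k = σ₁ (cc k)² -/
lemma cc_sq' {n : ℕ} : ∀ k, 1 ≤ k → k ≤ n - 1 →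
    ∀ x : BraidGroup n, cc n k * (cc n k * (s n k * x)) = s n 1 * (cc n k * (cc n k * x)) := by
  intro k
  induction k with
  | zero => intro hk; exact absurd hk (by omega)
  | succ k ih =>
    intro _ hkn x
    rcases Nat.eq_zero_or_pos k with hk0 | hk0
    · subst hk0
      simp only [cc_succ', cc_zero']
    · obtain ⟨m, rfl⟩ : ∃ m, k = m + 1 := ⟨k - 1, by omega⟩
      have ih2 := ih (by omega) (by omega)
      simp only [cc_succ'] at ih2 ⊢
      rw [s_comm_cc' m (m+1+1) (by omega) (by omega),
        ← s_braid' (i := m+1) (by omega) (by omega),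
        ← s_braid' (i := m+1) (by omega) (by omega),
        ih2,
        s_comm_cc' m (m+1+1) (by omega) (by omega),
        ← s_braid' (i := m+1) (by omega) (by omega)]

lemma delta_pow' {n : ℕ} : ∀ (m : ℕ) {i : ℕ}, 1 ≤ i → i + m ≤ n - 1 →
    ∀ x : BraidGroup n,
      (cc n (n-1))^m * (s n i * x) = s n (i+m) * ((cc n (n-1))^m * x) := by
  intro m
  induction m with
  | zero => intro i h1 h2 x; simp
  | succ m ih =>
    intro i h1 h2 x
    have e : (cc n (n-1))^(m+1) = cc n (n-1) * (cc n (n-1))^m := by rw [← pow_succ']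
    rw [e, mul_assoc, mul_assoc, ih h1 (by omega),
      cc_conj' (i := i + m) (by omega) (n-1) (by omega) (le_refl _),
      show i + m + 1 = i + (m+1) from rfl]

lemma theta_comm' {n i : ℕ} (hn : 3 ≤ n) (h1 : 1 ≤ i) (h2 : i ≤ n - 1) (x : BraidGroup n) :
    (cc n (n-1))^n * (s n i * x) = s n i * ((cc n (n-1))^n * x) := by
  have e : (cc n (n-1))^n
      = (cc n (n-1))^(i-1) * ((cc n (n-1))^2 * (cc n (n-1))^(n-1-i)) := by
    rw [← pow_add, ← pow_add]; congr 1; omega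
  have sq : ∀ y : BraidGroup n,
      (cc n (n-1))^2 * (s n (n-1) * y) = s n 1 * ((cc n (n-1))^2 * y) := by
    intro y
    have h := cc_sq' (n-1) (by omega) (le_refl _) y
    rw [pow_two, mul_assoc, mul_assoc]
    exact h
  rw [e]
  simp only [mul_assoc]
  rw [delta_pow' (n-1-i) h1 (by omega), show i + (n-1-i) = n-1 by omega, sq,
    delta_pow' (i-1) (by omega) (by omega), show 1 + (i-1) = i by omega]

lemma delta_s_inv {n : ℕ} (hn : 3 ≤ n) :
    cc n (n-1) * (s n (n-1))⁻¹ = cc n (n-2) := by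
  rw [mul_inv_eq_iff_eq_mul]
  have h := cc_succ' (n := n) (k := n-2) (1 : BraidGroup n)
  rw [show n-2+1 = n-1 by omega] at h
  simpa using h

lemma theta_s_inv {n i : ℕ} (hn : 3 ≤ n) (h1 : 1 ≤ i) (h2 : i ≤ n - 1) :
    (cc n (n-1))^n * (s n i)⁻¹
      = (cc n (n-1))^i * (cc n (n-2) * (cc n (n-1))^(n-1-i)) := by
  have hconj : (cc n (n-1))^(n-1-i) * s n i = s n (n-1) * (cc n (n-1))^(n-1-i) := by
    have h := delta_pow' (n-1-i) h1 (by omega) (1 : BraidGroup n)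
    rw [show i + (n-1-i) = n-1 by omega] at h
    simpa using h
  have hinv : (cc n (n-1))^(n-1-i) * (s n i)⁻¹
      = (s n (n-1))⁻¹ * (cc n (n-1))^(n-1-i) := by
    rw [mul_inv_eq_iff_eq_mul, mul_assoc, hconj, ← mul_assoc, inv_mul_cancel, one_mul]
  have e : (cc n (n-1))^n = (cc n (n-1))^i * (cc n (n-1) * (cc n (n-1))^(n-1-i)) := by
    rw [← pow_succ', ← pow_add]; congr 1; omega
  rw [e, mul_assoc, mul_assoc, hinv, ← mul_assoc (cc n (n-1)) (s n (n-1))⁻¹,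
    delta_s_inv hn]

lemma posProd_join_replicate {n : ℕ} (L : List ℕ) :
    ∀ m : ℕ, posProd n ((List.replicate m L).flatten) = (posProd n L)^m := by
  intro m
  induction m with
  | zero => simp [posProd]
  | succ m ih =>
    rw [List.replicate_succ]
    show posProd n (L ++ (List.replicate m L).flatten) = _
    rw [posProd_append, ih, pow_succ']

lemma main_aux {n : ℕ} (hn : 3 ≤ n) :
    ∀ V : List (ℕ × Bool), (∀ x ∈ V, 1 ≤ x.1 ∧ x.1 ≤ n - 1) →
    ∃ (t : ℕ) (P : List ℕ), (∀ k ∈ P, 1 ≤ k ∧ k ≤ n - 1) ∧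
      sprod n V = (((cc n (n-1))^n)^t)⁻¹ * posProd n P := by
  intro V
  induction V with
  | nil => intro _; exact ⟨0, [], by simp, by simp [sprod, posProd]⟩
  | cons a V ih =>
    intro hV
    obtain ⟨t, P, hP, hE⟩ := ih (fun x hx => hV x (List.mem_cons_of_mem a hx))
    obtain ⟨ha1, ha2⟩ := hV a (List.mem_cons_self)
    have hc : Commute (s n a.1) ((cc n (n-1))^n) := by
      have h := theta_comm' hn ha1 ha2 (1:BraidGroup n)
      simp only [mul_one] at h
      exact h.symm
    obtain ⟨i, e⟩ := a
    simp only at ha1 ha2 hc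
    cases e with
    | true =>
      refine ⟨t, i :: P, fun k hk => ?_, ?_⟩
      · rcases List.mem_cons.mp hk with rfl | hk
        · exact ⟨ha1, ha2⟩
        · exact hP k hk
      · calc sprod n ((i, true) :: V) = s n i * sprod n V := by simp [sprod]
          _ = s n i * ((((cc n (n-1))^n)^t)⁻¹ * posProd n P) := by rw [hE]
          _ = (((cc n (n-1))^n)^t)⁻¹ * (s n i * posProd n P) := by
              rw [← mul_assoc, ((hc.pow_right t).inv_right).eq, mul_assoc]
          _ = (((cc n (n-1))^n)^t)⁻¹ * posProd n (i :: P) := by simp [posProd]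
    | false =>
      obtain ⟨W, hWdef⟩ : ∃ W : List ℕ, W = (List.replicate i (cword (n-1))).flatten ++
          (cword (n-2) ++ (List.replicate (n-1-i) (cword (n-1))).flatten) := ⟨_, rfl⟩
      have hW : posProd n W = (cc n (n-1))^n * (s n i)⁻¹ := by
        rw [theta_s_inv hn ha1 ha2, hWdef, posProd_append, posProd_append,
          posProd_join_replicate, posProd_join_replicate]
        rfl
      have hWb : ∀ k ∈ W, 1 ≤ k ∧ k ≤ n - 1 := by
        intro k hk
        rw [hWdef] at hk
        rcases List.mem_append.mp hk with hk | hk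
        · obtain ⟨l, hl, hkl⟩ := List.mem_flatten.mp hk
          obtain ⟨-, rfl⟩ := List.mem_replicate.mp hl
          have := mem_cword hkl; omega
        · rcases List.mem_append.mp hk with hk | hk
          · have := mem_cword hk; omega
          · obtain ⟨l, hl, hkl⟩ := List.mem_flatten.mp hk
            obtain ⟨-, rfl⟩ := List.mem_replicate.mp hl
            have := mem_cword hkl; omega
      have hsi : (s n i)⁻¹ = ((cc n (n-1))^n)⁻¹ * posProd n W := by
        rw [hW, ← mul_assoc, inv_mul_cancel, one_mul]
      have cW : Commute (posProd n W) ((((cc n (n-1))^n)^t)⁻¹) := by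
        rw [hW]
        exact (Commute.mul_left ((Commute.refl _).pow_right t)
          ((hc.pow_right t).inv_left)).inv_right
      refine ⟨t + 1, W ++ P, fun k hk => ?_, ?_⟩
      · rcases List.mem_append.mp hk with hk | hk
        · exact hWb k hk
        · exact hP k hk
      · calc sprod n ((i, false) :: V) = (s n i)⁻¹ * sprod n V := by simp [sprod]
          _ = (((cc n (n-1))^n)⁻¹ * posProd n W) *
              ((((cc n (n-1))^n)^t)⁻¹ * posProd n P) := by rw [hE, hsi]
          _ = ((cc n (n-1))^n)⁻¹ * ((((cc n (n-1))^n)^t)⁻¹ *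
              (posProd n W * posProd n P)) := by
              rw [mul_assoc, ← mul_assoc (posProd n W), cW.eq, mul_assoc]
          _ = (((cc n (n-1))^n)^(t+1))⁻¹ * posProd n (W ++ P) := by
              rw [pow_succ, mul_inv_rev, posProd_append, mul_assoc]


/-- Symmetric standard division: every standard word `V` of `B_n` is equivalent to
`Q⁻¹·P` with `P, Q` positive standard words. -/
theorem symmetric_standard_division (n : ℕ) (hn : 3 ≤ n) (V : List (ℕ × Bool))
    (hV : ∀ x ∈ V, 1 ≤ x.1 ∧ x.1 ≤ n - 1) :
    ∃ P Q : List ℕ,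
      (∀ k ∈ P, 1 ≤ k ∧ k ≤ n - 1) ∧
      (∀ k ∈ Q, 1 ≤ k ∧ k ≤ n - 1) ∧
      sprod n V = (posProd n Q)⁻¹ * posProd n P := by

  obtain ⟨t, P, hP, hE⟩ := main_aux hn V hV
  refine ⟨P, (List.replicate (n * t) (cword (n-1))).flatten, hP, fun k hk => ?_, ?_⟩
  · obtain ⟨l, hl, hkl⟩ := List.mem_flatten.mp hk
    obtain ⟨-, rfl⟩ := List.mem_replicate.mp hl
    have := mem_cword hkl; omega
  · rw [hE, posProd_join_replicate, pow_mul]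
    rfl

end Braid
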